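/- Let M be a loopless matroid of rank n on E = {0,...,N} and Σ(M) the fan in ℝ^{N+1} whose k-dimensional cones are spanned by {e_{J₁},...,e_{J_k}} for flags of flats J₁ ⊊ ... ⊊ J_k. Then the homology group F_k(Σ(M)) ⊆ ⋀^k ℤ^{N+1} is generated by the subgroups F_k(Σ(J)) where J runs over the flats of M of rank exactly k; equivalently, every element e_{J₁} ∧ ... ∧ e_{J_k} for a flag of flats is a ℤ-linear combination of such elements with flags consisting of flats of ranks 1, 2, ..., k respectively. -/

import Mathlib

/- Shared definitions: exterior algebra pairing, basis vectors, boundary operator,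
   and elementary matroid notions (rank, looplessness) not present in this Mathlib. -/

open ExteriorAlgebra

set_option maxHeartbeats 1000000
set_option synthInstance.maxHeartbeats 400000

open Classical in
/-- `e_S`: sum of the standard basis vectors of `ℤ^n` indexed by `S`. -/
noncomputable def eS {n : ℕ} (S : Set (Fin n)) : Fin n → ℤ := fun j => if j ∈ S then 1 else 0

/-- the `i`-th standard basis vector of `ℤ^n`. -/
noncomputable def fb {n : ℕ} (i : Fin n) : Fin n → ℤ := Pi.single i 1

/-- The pairing of a pure `k`-fold wedge `v₁ ∧ ... ∧ v_k` of vectors of `V` with the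
exterior algebra of the dual module, determined by
`⟨w₁ ∧ ... ∧ w_k, v₁ ∧ ... ∧ v_k⟩ = det (wᵢ (vⱼ))` on the degree-`k` part and `0` on
other degrees. -/
noncomputable def pairPure {V : Type*} [AddCommGroup V] [Module ℤ V] (k : ℕ)
    (v : Fin k → V) : ExteriorAlgebra ℤ (Module.Dual ℤ V) →ₗ[ℤ] ℤ :=
  ExteriorAlgebra.liftAlternating fun m =>
    if h : m = k then
      h ▸ (Matrix.detRowAlternating.compLinearMap
        (LinearMap.pi fun j : Fin k => LinearMap.applyₗ (v j)))
    else 0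

/-- A matroid is loopless if every singleton of the ground set is independent. -/
def Matroid.Loopless' {α : Type*} (M : Matroid α) : Prop := ∀ x ∈ M.E, M.Indep {x}

/-- The rank of a set in a matroid: the largest cardinality of an independent subset. -/
noncomputable def Matroid.rk' {α : Type*} (M : Matroid α) (X : Set α) : ℕ :=
  sSup {m : ℕ | ∃ I, I ⊆ X ∧ M.Indep I ∧ I.ncard = m}

namespace MatroidAux
open Set

variable {α : Type*} {M : Matroid α} {X Y I J : Set α} {a : α}


lemma closure_flat (M : Matroid α) (X : Set α) : M.IsFlat (M.closure X) := by
  have hne : Nonempty {F : Set α // M.IsFlat F ∧ X ∩ M.E ⊆ F} :=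
    ⟨⟨M.E, M.ground_isFlat, inter_subset_right⟩⟩
  have : M.closure X = ⋂ F : {F : Set α // M.IsFlat F ∧ X ∩ M.E ⊆ F}, F.1 := by
    rw [Matroid.closure_def, sInter_eq_iInter]
    rfl
  rw [this]
  exact Matroid.IsFlat.iInter fun F => F.2.1

section Fintype

variable [Fintype α]

lemma bddAbove_aux (X : Set α) :
    BddAbove {m : ℕ | ∃ I, I ⊆ X ∧ M.Indep I ∧ I.ncard = m} := by
  refine ⟨Fintype.card α, ?_⟩
  rintro m ⟨I, hIX, hI, rfl⟩
  simpa [Set.ncard_univ] using Set.ncard_le_ncard (subset_univ I) (finite_univ)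

lemma ncard_le_rk' (hI : M.Indep I) (hIX : I ⊆ X) : I.ncard ≤ M.rk' X :=
  le_csSup (bddAbove_aux X) ⟨I, hIX, hI, rfl⟩

lemma rk'_eq_of_basis (hI : M.IsBasis I X) : M.rk' X = I.ncard := by
  refine le_antisymm (csSup_le ⟨0, ∅, empty_subset _, M.empty_indep, by simp⟩ ?_)
    (ncard_le_rk' hI.indep hI.subset)
  rintro m ⟨J, hJX, hJ, rfl⟩
  obtain ⟨J', hJ', hJJ'⟩ := hJ.subset_isBasis_of_subset hJX hI.subset_ground
  have h1 : J.encard ≤ J'.encard := Set.encard_le_encard hJJ'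
  rw [hJ'.encard_eq_encard hI] at h1
  rw [Set.ncard_def, Set.ncard_def]
  exact ENat.toNat_le_toNat h1 (Set.toFinite I).encard_lt_top.ne

lemma rk'_le_ncard (X : Set α) : M.rk' X ≤ X.ncard := by
  refine csSup_le ⟨0, ∅, empty_subset _, M.empty_indep, by simp⟩ ?_
  rintro m ⟨J, hJX, _, rfl⟩
  exact Set.ncard_le_ncard hJX (Set.toFinite X)

lemma rk'_empty (M : Matroid α) : M.rk' (∅ : Set α) = 0 :=
  Nat.le_zero.mp (by simpa using rk'_le_ncard (M := M) (∅ : Set α))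

lemma rk'_lt_of_flat_ssubset (hX : M.IsFlat X) (hXY : X ⊂ Y) (hY : Y ⊆ M.E) :
    M.rk' X < M.rk' Y := by
  obtain ⟨I, hI⟩ := M.exists_isBasis X hX.subset_ground
  obtain ⟨a, haY, haX⟩ := exists_of_ssubset hXY
  have hclI : M.closure I = X := by rw [hI.closure_eq_closure, hX.closure]
  have haI : a ∉ I := fun h => haX (hI.subset h)
  have hins : M.Indep (insert a I) := by
    rw [hI.indep.insert_indep_iff_of_notMem haI, hclI]
    exact ⟨hY haY, haX⟩
  have hsub : insert a I ⊆ Y := insert_subset haY (hI.subset.trans hXY.subset)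
  have := ncard_le_rk' hins hsub
  rw [Set.ncard_insert_of_notMem haI (Set.toFinite I)] at this
  rw [rk'_eq_of_basis hI]
  omega

lemma rk'_closure_eq (M : Matroid α) (X : Set α) (hX : X ⊆ M.E) :
    M.rk' (M.closure X) = M.rk' X := by
  obtain ⟨I, hI⟩ := M.exists_isBasis X hX
  rw [rk'_eq_of_basis hI, rk'_eq_of_basis hI.isBasis_closure_right]

lemma rk'_closure_insert_le (hX : X ⊆ M.E) (ha : a ∈ M.E) :
    M.rk' (M.closure (insert a X)) ≤ M.rk' X + 1 := by
  obtain ⟨I, hI⟩ := M.exists_isBasis X hX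
  have h1 : M.closure (insert a X) = M.closure (insert a I) := by
    rw [← Matroid.closure_insert_closure_eq_closure_insert, ← hI.closure_eq_closure,
      Matroid.closure_insert_closure_eq_closure_insert]
  rw [h1, rk'_closure_eq M _ (insert_subset ha hI.indep.subset_ground),
    rk'_eq_of_basis hI]
  exact (rk'_le_ncard _).trans (Set.ncard_insert_le _ _)

lemma rk'_mono (hXY : X ⊆ Y) : M.rk' X ≤ M.rk' Y := by
  refine csSup_le ⟨0, ∅, empty_subset _, M.empty_indep, by simp⟩ ?_
  rintro m ⟨J, hJX, hJ, rfl⟩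
  exact ncard_le_rk' hJ (hJX.trans hXY)

end Fintype

lemma flat_empty (hM : ∀ x ∈ M.E, M.Indep {x}) : M.IsFlat (∅ : Set α) := by
  have h : M.closure (∅ : Set α) = ∅ := by
    ext e
    simp only [mem_empty_iff_false, iff_false]
    intro he
    have heE : e ∈ M.E := Matroid.mem_ground_of_mem_closure he
    have := (M.empty_indep.mem_closure_iff (x := e)).mp he
    rcases this with h | h
    · exact h.not_indep (by simpa using hM e heE)
    · exact h
  exact h ▸ closure_flat M ∅




section Decomp

variable {N : ℕ} {M : Matroid (Fin (N+1))} {X Y : Set (Fin (N+1))}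

lemma eS_decomp (hX : M.IsFlat X) (hY : M.IsFlat Y) (hXY : X ⊂ Y)
    (A : Finset (Set (Fin (N+1))))
    (hA : ∀ F, F ∈ A ↔ ∃ a ∈ Y \ X, F = M.closure (insert a X)) :
    eS Y = eS X + ∑ F ∈ A, (eS F - eS X) := by
  classical
  have hXE := hX.subset_ground
  have hYE := hY.subset_ground
  have hXsubF : ∀ F ∈ A, X ⊆ F := by
    intro F hF
    obtain ⟨a, _, rfl⟩ := (hA F).mp hF
    exact (M.subset_closure X hXE).trans (M.closure_subset_closure (subset_insert a X))
  have hFsubY : ∀ F ∈ A, F ⊆ Y := by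
    intro F hF
    obtain ⟨a, ha, rfl⟩ := (hA F).mp hF
    exact (M.closure_subset_closure (insert_subset ha.1 hXY.subset)).trans_eq hY.closure
  funext j
  simp only [eS, Pi.add_apply, Finset.sum_apply, Pi.sub_apply]
  by_cases hjX : j ∈ X
  · rw [if_pos hjX, if_pos (hXY.subset hjX), Finset.sum_eq_zero, add_zero]
    intro F hF
    rw [if_pos (hXsubF F hF hjX), sub_self]
  by_cases hjY : j ∈ Y
  · rw [if_pos hjY, if_neg hjX]
    have key : ∀ F ∈ A, (j ∈ F ↔ F = M.closure (insert j X)) := by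
      intro F hF
      obtain ⟨a, ha, rfl⟩ := (hA F).mp hF
      constructor
      · intro hjF
        apply subset_antisymm
        · have hj' : j ∈ M.closure (insert a X) \ M.closure X := by
            rw [hX.closure]; exact ⟨hjF, hjX⟩
          have haj := (Matroid.closure_exchange hj').1
          exact M.closure_subset_closure_of_subset_closure
            (insert_subset haj ((M.subset_closure X hXE).trans
              (M.closure_subset_closure (subset_insert j X))))
        · exact M.closure_subset_closure_of_subset_closure
            (insert_subset hjF ((M.subset_closure X hXE).trans
              (M.closure_subset_closure (subset_insert a X))))
      · intro he
        rw [he]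
        exact M.mem_closure_of_mem (mem_insert j X) (insert_subset (hYE hjY) hXE)
    rw [zero_add]
    have h1 : ∀ F ∈ A, ((if j ∈ F then (1:ℤ) else 0) - 0) =
        (if F = M.closure (insert j X) then (1:ℤ) else 0) := by
      intro F hF
      rw [sub_zero]
      by_cases h : j ∈ F
      · rw [if_pos h, if_pos ((key F hF).mp h)]
      · rw [if_neg h, if_neg (fun he => h ((key F hF).mpr he))]
    rw [Finset.sum_congr rfl h1, Finset.sum_ite_eq' A _ (fun _ => (1:ℤ)),
      if_pos ((hA _).mpr ⟨j, ⟨hjY, hjX⟩, rfl⟩)]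
  · rw [if_neg hjY, if_neg hjX, zero_add, Finset.sum_eq_zero]
    intro F hF
    rw [if_neg (fun h => hjY (hFsubY F hF h)), sub_zero]

end Decomp

open ExteriorAlgebra in
lemma key_mem {N : ℕ} {M : Matroid (Fin (N+1))} (hM : ∀ x ∈ M.E, M.Indep {x})
    (hE : M.E = univ) (k : ℕ) :
    ∀ (n : ℕ) (c : Fin k → Set (Fin (N+1))), (∑ j, M.rk' (c j)) = n →
      (∀ j, M.IsFlat (c j)) → StrictMono c →
      (ιMulti ℤ k fun j => eS (c j)) ∈ Submodule.span ℤ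
        {x : ExteriorAlgebra ℤ (Fin (N + 1) → ℤ) |
          ∃ c : Fin k → Set (Fin (N + 1)), (∀ i, M.IsFlat (c i)) ∧ StrictMono c ∧
            (∀ i, M.rk' (c i) = (i : ℕ) + 1) ∧
            x = ιMulti ℤ k fun i => eS (c i)} := by
  intro n
  induction n using Nat.strong_induction_on with
  | _ n IH =>
  intro c hsum hflat hmono
  classical
  by_cases hall : ∀ j : Fin k, M.rk' (c j) = (j : ℕ) + 1
  · exact Submodule.subset_span ⟨c, hflat, hmono, hall, rfl⟩
  push_neg at hall
  set S : Finset (Fin k) := Finset.univ.filter (fun j => M.rk' (c j) ≠ (j : ℕ) + 1) with hS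
  have hSne : S.Nonempty := by
    obtain ⟨i0, hi0⟩ := hall
    exact ⟨i0, by simp [hS, hi0]⟩
  set i := S.min' hSne with hidef
  have hiS : i ∈ S := S.min'_mem hSne
  have hine : M.rk' (c i) ≠ (i : ℕ) + 1 := by
    simpa [hS] using hiS
  have hmin : ∀ j : Fin k, j < i → M.rk' (c j) = (j : ℕ) + 1 := by
    intro j hj
    by_contra hne
    exact absurd (S.min'_le j (by simp [hS, hne])) (not_le.mpr hj)
  have hflatE : ∀ j : Fin k, c j ⊆ M.E := fun j => (hflat j).subset_ground
  rcases lt_or_gt_of_ne hine with hlt | hgt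
  · -- low rank: only possible when i = 0 and c i = ∅
    by_cases h0 : (i : ℕ) = 0
    · have hr0 : M.rk' (c i) = 0 := by omega
      have hci : c i = ∅ := by
        by_contra hne
        obtain ⟨x, hx⟩ := nonempty_iff_ne_empty.mpr hne
        have := ncard_le_rk' (hM x (hflatE i hx)) (singleton_subset_iff.mpr hx)
        rw [Set.ncard_singleton] at this
        omega
      have hz : eS (c i) = 0 := by
        rw [hci]; funext j; simp [eS]
      have h00 : ((ιMulti ℤ k) fun j => eS (c j)) = 0 :=
        (ιMulti ℤ k).toMultilinearMap.map_coord_zero (m := fun j => eS (c j)) i hz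
      rw [h00]
      exact Submodule.zero_mem _
    · have hik : (i : ℕ) - 1 < k := by omega
      set p : Fin k := ⟨(i : ℕ) - 1, hik⟩ with hp
      have hpi : p < i := by
        rw [Fin.lt_def]; simp only [hp]; omega
      have h1 : M.rk' (c p) = (i : ℕ) := by
        rw [hmin p hpi]; simp only [hp]; omega
      have h2 := rk'_lt_of_flat_ssubset (hflat p) (hmono hpi) (hflatE i)
      omega
  · -- high rank: refine
    obtain ⟨X, hXflat, hXss, hXrk, hXbelow, hXzero⟩ :
        ∃ X, M.IsFlat X ∧ X ⊂ c i ∧ M.rk' X = (i : ℕ) ∧ (∀ j, j < i → c j ⊆ X) ∧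
          (eS X = 0 ∨ ∃ p : Fin k, p < i ∧ c p = X) := by
      by_cases h0 : (i : ℕ) = 0
      · refine ⟨∅, flat_empty hM, ?_, by rw [rk'_empty, h0], ?_, Or.inl ?_⟩
        · rw [empty_ssubset]
          by_contra hne
          rw [not_nonempty_iff_eq_empty] at hne
          rw [hne, rk'_empty] at hgt
          omega
        · intro j hj
          rw [Fin.lt_def] at hj
          omega
        · funext j; simp [eS]
      · have hik : (i : ℕ) - 1 < k := by omega
        set p : Fin k := ⟨(i : ℕ) - 1, hik⟩ with hp
        have hpi : p < i := by rw [Fin.lt_def]; simp only [hp]; omega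
        refine ⟨c p, hflat p, hmono hpi, ?_, ?_, Or.inr ⟨p, hpi, rfl⟩⟩
        · rw [hmin p hpi]; simp only [hp]; omega
        · intro j hj
          refine hmono.monotone ?_
          rw [Fin.le_def]
          rw [Fin.lt_def] at hj
          show (j : ℕ) ≤ (i : ℕ) - 1
          omega
    set A : Finset (Set (Fin (N+1))) := ((c i \ X).toFinite.toFinset).image
        (fun a => M.closure (insert a X)) with hAdef
    have hA : ∀ F, F ∈ A ↔ ∃ a ∈ c i \ X, F = M.closure (insert a X) := by
      intro F
      simp only [hAdef, Finset.mem_image, Set.Finite.mem_toFinset]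
      constructor
      · rintro ⟨a, ha, rfl⟩; exact ⟨a, ha, rfl⟩
      · rintro ⟨a, ha, rfl⟩; exact ⟨a, ha, rfl⟩
    have hdecomp := eS_decomp hXflat (hflat i) hXss A hA
    set v : Fin k → (Fin (N+1) → ℤ) := fun t => eS (c t) with hvdef
    have hzero : (ιMulti ℤ k) (Function.update v i (eS X)) = 0 := by
      rcases hXzero with h | ⟨p, hpi, hpX⟩
      · rw [h]
        exact (ιMulti ℤ k).toMultilinearMap.map_update_zero v i
      · refine AlternatingMap.map_eq_zero_of_eq _ _ (i := p) (j := i) ?_ (ne_of_lt hpi)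
        rw [Function.update_of_ne (ne_of_lt hpi), Function.update_self, hvdef]
        simp only
        rw [hpX]
    have hmain : (ιMulti ℤ k) v = ∑ F ∈ A, (ιMulti ℤ k) (Function.update v i (eS F)) := by
      have hcoe : ∀ w : Fin k → (Fin (N+1) → ℤ),
          (ιMulti ℤ k) w = (ιMulti ℤ k).toMultilinearMap w := fun _ => rfl
      conv_lhs => rw [← Function.update_eq_self i v]
      have hvi : v i = eS (c i) := rfl
      rw [hcoe, hvi, hdecomp, (ιMulti ℤ k).toMultilinearMap.map_update_add,
        (ιMulti ℤ k).toMultilinearMap.map_update_sum A i (fun F => eS F - eS X) v,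
        show (ιMulti ℤ k).toMultilinearMap (Function.update v i (eS X)) = 0 from hzero,
        zero_add]
      refine Finset.sum_congr rfl fun F hF => ?_
      rw [(ιMulti ℤ k).toMultilinearMap.map_update_sub,
        show (ιMulti ℤ k).toMultilinearMap (Function.update v i (eS X)) = 0 from hzero,
        sub_zero]
      exact (hcoe _).symm
    rw [show (ιMulti ℤ k fun j => eS (c j)) = (ιMulti ℤ k) v from rfl, hmain]
    refine Submodule.sum_mem _ fun F hF => ?_
    obtain ⟨a, ⟨haY, haX⟩, rfl⟩ := (hA F).mp hF
    set F := M.closure (insert a X) with hFdef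
    have hFflat : M.IsFlat F := closure_flat M _
    have hinsE : insert a X ⊆ M.E := by rw [hE]; exact subset_univ _
    have haF : a ∈ F := M.mem_closure_of_mem (mem_insert a X) hinsE
    have hXsubF : X ⊆ F :=
      (M.subset_closure X hXflat.subset_ground).trans
        (M.closure_subset_closure (subset_insert a X))
    have hXF : X ⊂ F := hXsubF.ssubset_of_ne (fun h => haX (h ▸ haF))
    have hrkF : M.rk' F ≤ (i : ℕ) + 1 := by
      rw [hFdef]
      have := rk'_closure_insert_le (M := M) (a := a) hXflat.subset_ground
        (by rw [hE]; exact mem_univ a)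
      omega
    have hFsubci : F ⊆ c i :=
      (M.closure_subset_closure (insert_subset haY hXss.subset)).trans_eq (hflat i).closure
    have hFci : F ⊂ c i := hFsubci.ssubset_of_ne (fun h => by rw [h] at hrkF; omega)
    set c' : Fin k → Set (Fin (N+1)) := Function.update c i F with hc'def
    have hc'app : ∀ x, c' x = if x = i then F else c x := fun x =>
      Function.update_apply c i F x
    have hc'flat : ∀ j, M.IsFlat (c' j) := by
      intro j
      rw [hc'app j]
      split_ifs
      · exact hFflat
      · exact hflat j
    have hc'mono : StrictMono c' := by
      intro s t hst
      rw [hc'app s, hc'app t]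
      split_ifs with h1 h2 h2
    
      · exact absurd (h1.trans h2.symm) (ne_of_lt hst)
      · exact hFci.trans (hmono (show i < t from h1 ▸ hst))
      · exact lt_of_le_of_lt (hXbelow s (show s < i from h2 ▸ hst)) hXF
      · exact hmono hst
    have hvc' : Function.update v i (eS F) = fun t => eS (c' t) := by
      funext t
      rw [Function.update_apply, hc'app t]
      split_ifs
      · rfl
      · rfl
    have hsum' : ∑ j, M.rk' (c' j) < n := by
      rw [← hsum]
      have h1 : (fun j => M.rk' (c' j)) = Function.update (fun j => M.rk' (c j)) i (M.rk' F) := by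
        funext j
        exact Function.apply_update (fun _ s => M.rk' s) c i F j
      calc ∑ j, M.rk' (c' j) = ∑ j, Function.update (fun j => M.rk' (c j)) i (M.rk' F) j := by
            rw [h1]
        _ = M.rk' F + ∑ j ∈ Finset.univ \ {i}, M.rk' (c j) :=
            Finset.sum_update_of_mem (Finset.mem_univ i) _ _
        _ < M.rk' (c i) + ∑ j ∈ Finset.univ \ {i}, M.rk' (c j) :=
            Nat.add_lt_add_right (by omega) _
        _ = ∑ j, M.rk' (c j) := by
            rw [show (M.rk' (c i) + ∑ j ∈ Finset.univ \ {i}, M.rk' (c j)) =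
                ∑ j, Function.update (fun j => M.rk' (c j)) i (M.rk' (c i)) j from
                (Finset.sum_update_of_mem (Finset.mem_univ i) _ _).symm,
              Function.update_eq_self]
    rw [hvc']
    exact IH _ hsum' c' rfl hc'flat hc'mono

end MatroidAux

/-- The homology group `F_k(Σ(M))`, spanned by the wedges
`e_{J₁} ∧ ... ∧ e_{J_k}` over flags of flats `J₁ ⊊ ... ⊊ J_k` of a loopless matroid `M`
on `{0, ..., N}`, is already spanned by those wedges coming from flags whose flats have
ranks `1, 2, ..., k` respectively (equivalently, it is generated by the subgroups
`F_k(Σ(J))` over the rank-`k` flats `J`). -/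
theorem stmt_4 {N : ℕ} (M : Matroid (Fin (N + 1))) (hM : M.Loopless')
    (hE : M.E = Set.univ) (k : ℕ) :
    Submodule.span ℤ {x : ExteriorAlgebra ℤ (Fin (N + 1) → ℤ) |
        ∃ c : Fin k → Set (Fin (N + 1)), (∀ i, M.IsFlat (c i)) ∧ StrictMono c ∧
          x = ιMulti ℤ k fun i => eS (c i)} =
    Submodule.span ℤ {x : ExteriorAlgebra ℤ (Fin (N + 1) → ℤ) |
        ∃ c : Fin k → Set (Fin (N + 1)), (∀ i, M.IsFlat (c i)) ∧ StrictMono c ∧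
          (∀ i, M.rk' (c i) = (i : ℕ) + 1) ∧
          x = ιMulti ℤ k fun i => eS (c i)} := by
  apply le_antisymm
  · rw [Submodule.span_le]
    rintro x ⟨c, hf, hm, rfl⟩
    exact MatroidAux.key_mem hM hE k _ c rfl hf hm
  · apply Submodule.span_mono
    rintro x ⟨c, h1, h2, _, h4⟩
    exact ⟨c, h1, h2, h4⟩
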